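/- Let G be a finite graph, v a vertex such that N(v) is an independent set, D* a set of vertices, S = a subset of N(v) disjoint from N[D*] with v ∉ N[D*], and let X be an inclusion-wise minimal set dominating S ∪ {v} with v ∉ X. Then either X minimally dominates S, or there exists u ∈ N(v) ∩ X such that X \ {u} is an inclusion-wise minimal dominating set of S \ {u}. -/
import Mathlib


open Set

variable {V : Type*}

/-- The closed neighborhood of a set of vertices: `N[X]`. -/
def closedNbhd (G : SimpleGraph V) (X : Set V) : Set V :=
  {y | ∃ x ∈ X, y = x ∨ G.Adj x y}

/-- `X` dominates `A` in `G`: `A ⊆ N[X]`. -/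
def Dominates (G : SimpleGraph V) (X A : Set V) : Prop :=
  A ⊆ closedNbhd G X

/-- `X` is an inclusion-wise minimal set dominating `A` in `G`. -/
def MinDom (G : SimpleGraph V) (X A : Set V) : Prop :=
  Dominates G X A ∧ ∀ Y, Y ⊂ X → ¬ Dominates G Y A

/-- `S` is an independent set in `G`. -/
def IndepSet (G : SimpleGraph V) (S : Set V) : Prop :=
  S.Pairwise fun x y => ¬ G.Adj x y

lemma closedNbhd_mono (G : SimpleGraph V) {X Y : Set V} (h : X ⊆ Y) :
    closedNbhd G X ⊆ closedNbhd G Y := by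
  rintro z ⟨x, hx, hz⟩
  exact ⟨x, h hx, hz⟩

theorem stmt_7 [Fintype V] (G : SimpleGraph V) (v : V) (Dstar S X : Set V)
    (hind : IndepSet G (G.neighborSet v))
    (hS : S ⊆ G.neighborSet v)
    (hSD : S ∩ closedNbhd G Dstar = ∅)
    (hv : v ∉ closedNbhd G Dstar)
    (hX : MinDom G X (S ∪ {v})) (hvX : v ∉ X) :
    MinDom G X S ∨
      ∃ u ∈ G.neighborSet v ∩ X, MinDom G (X \ {u}) (S \ {u}) := by
  by_cases h : ∃ x ∈ X, Dominates G (X \ {x}) S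
  · obtain ⟨x, hxX, hdom⟩ := h
    -- removing x must destroy domination of v
    have hnotv : v ∉ closedNbhd G (X \ {x}) := by
      intro hvmem
      refine hX.2 (X \ {x}) ⟨diff_subset, fun hsub => ?_⟩ ?_
      · exact ((hsub hxX).2 rfl)
      · rintro s (hs | hs)
        · exact hdom hs
        · rcases hs with rfl; exact hvmem
    obtain ⟨w, hwX, hw⟩ := hX.1 (mem_union_right S rfl)
    have hwx : w = x := by
      by_contra hne
      exact hnotv ⟨w, ⟨hwX, hne⟩, hw⟩
    subst hwx
    have hadj : G.Adj w v := by
      rcases hw with rfl | hw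
      · exact absurd hwX hvX
      · exact hw
    right
    refine ⟨w, ⟨hadj.symm, hxX⟩, fun s hs => hdom hs.1, ?_⟩
    rintro Z ⟨hZsub, hZne⟩ hZdom
    obtain ⟨a, haX, haZ⟩ := Set.not_subset.mp hZne
    refine hX.2 (Z ∪ {w}) ⟨?_, fun hsub => ?_⟩ ?_
    · rintro z (hz | hz)
      · exact (hZsub hz).1
      · rcases hz with rfl; exact hxX
    · rcases hsub haX.1 with hz | hz
      · exact haZ hz
      · exact haX.2 hz
    · rintro s (hs | hs)
      · by_cases hsw : s = w
        · exact ⟨w, Or.inr rfl, Or.inl hsw⟩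
        · obtain ⟨y, hy, hys⟩ := hZdom ⟨hs, hsw⟩
          exact ⟨y, Or.inl hy, hys⟩
      · rcases hs with rfl
        exact ⟨w, Or.inr rfl, Or.inr hadj⟩
  · left
    refine ⟨fun s hs => hX.1 (Or.inl hs), fun Y hY hYdom => ?_⟩
    obtain ⟨a, haX, haY⟩ := Set.not_subset.mp hY.2
    refine h ⟨a, haX, fun s hs => ?_⟩
    exact closedNbhd_mono G (show Y ⊆ X \ {a} from fun z hz => ⟨hY.1 hz, fun he => haY (he ▸ hz)⟩) (hYdom hs)
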